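/- Let F be a number field with ring of integers O_F. The map that sends a finite idele (x_v)_v to the fractional ideal ∏_v 𝔭_v^{v(x_v)} it generates induces a group isomorphism from the quotient of the finite idele group (the unit group of the finite adele ring of F) by the subgroup generated by the image of F^× (principal ideles) and by the subgroup ∏_v O_v^× of everywhere-integral unit ideles, onto the class group Cl(O_F). -/

import Mathlib

open IsDedekindDomain IsDedekindDomain.HeightOneSpectrum NumberField
open scoped nonZeroDivisors
open scoped Multiplicative
open scoped WithZero

variable (R K : Type) [CommRing R] [IsDedekindDomain R] [Field K] [Algebra R K]
  [IsFractionRing R K]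

/-- The (normalized additive) valuation `v(x) ∈ ℤ` of an element `x` of the `v`-adic
completion of `K` (with junk value `0` when `x = 0`), so that a uniformizer at `v` has
valuation `1`. -/
noncomputable def ideleAddVal (v : HeightOneSpectrum R) (x : v.adicCompletion K) : ℤ :=
  if h : Valued.v x = 0 then 0 else - Multiplicative.toAdd (WithZero.unzero h)

variable {R K}

lemma ideleAddVal_eq (v : HeightOneSpectrum R) {x : v.adicCompletion K} {n : ℤ}
    (h : Valued.v x = (Multiplicative.ofAdd (-n) : Multiplicative ℤ)) :
    ideleAddVal R K v x = n := by
  have hne : (Valued.v x : ℤᵐ⁰) ≠ 0 := by rw [h]; exact WithZero.coe_ne_zero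
  rw [ideleAddVal, dif_neg hne]
  have : WithZero.unzero hne = Multiplicative.ofAdd (-n) := by
    rw [← WithZero.coe_inj, WithZero.coe_unzero, h]
  rw [this, toAdd_ofAdd, neg_neg]

lemma ideleAddVal_eq_zero_iff (v : HeightOneSpectrum R) {x : v.adicCompletion K}
    (hx : (Valued.v x : ℤᵐ⁰) ≠ 0) :
    ideleAddVal R K v x = 0 ↔ Valued.v x = 1 := by
  constructor
  · intro h
    rw [ideleAddVal, dif_neg hx, neg_eq_zero] at h
    have := toAdd_eq_zero.mp h
    rw [← WithZero.coe_unzero hx, this, WithZero.coe_one]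
  · intro h
    exact ideleAddVal_eq v (by rw [h]; norm_num)

lemma ideleAddVal_mul (v : HeightOneSpectrum R) {x y : v.adicCompletion K}
    (hx : (Valued.v x : ℤᵐ⁰) ≠ 0) (hy : (Valued.v y : ℤᵐ⁰) ≠ 0) :
    ideleAddVal R K v (x * y) = ideleAddVal R K v x + ideleAddVal R K v y := by
  have hxy : (Valued.v (x * y) : ℤᵐ⁰) ≠ 0 := by
    rw [Valued.v.map_mul]; exact mul_ne_zero hx hy
  rw [ideleAddVal, ideleAddVal, ideleAddVal, dif_neg hxy, dif_neg hx, dif_neg hy]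
  have : WithZero.unzero hxy = WithZero.unzero hx * WithZero.unzero hy := by
    rw [← WithZero.coe_inj, WithZero.coe_mul, WithZero.coe_unzero, WithZero.coe_unzero, WithZero.coe_unzero,
      Valued.v.map_mul]
  rw [this, toAdd_mul, neg_add]

variable (R K)

/-- The nonzero prime ideal `𝔭ᵥ`, as an invertible fractional ideal of `R` in `K`. -/
noncomputable def primeAsFractionalIdealUnit (v : HeightOneSpectrum R) :
    (FractionalIdeal R⁰ K)ˣ :=
  Units.mk0 (v.asIdeal : FractionalIdeal R⁰ K)
    (FractionalIdeal.coeIdeal_ne_zero.mpr v.ne_bot)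

/-- The map sending a finite idele `(xᵥ)ᵥ` to the fractional ideal `∏ᵥ 𝔭ᵥ^(v(xᵥ))` it
generates. -/
noncomputable def ideleToFractionalIdeal (x : (FiniteAdeleRing R K)ˣ) :
    (FractionalIdeal R⁰ K)ˣ :=
  ∏ᶠ v : HeightOneSpectrum R,
    primeAsFractionalIdealUnit R K v ^ ideleAddVal R K v (x.val.val v)

variable {R K}

lemma unit_val_mul_inv (x : (FiniteAdeleRing R K)ˣ) (v : HeightOneSpectrum R) :
    x.val.val v * x.inv.val v = 1 := by
  have : (x.val * x.inv).val v = (1 : FiniteAdeleRing R K).val v := by rw [x.val_inv]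
  exact this

lemma unit_valued_ne_zero (x : (FiniteAdeleRing R K)ˣ) (v : HeightOneSpectrum R) :
    (Valued.v (x.val.val v) : ℤᵐ⁰) ≠ 0 := by
  have h := unit_val_mul_inv x v
  have : (Valued.v (x.val.val v) : ℤᵐ⁰) * Valued.v (x.inv.val v) = 1 := by
    rw [← Valued.v.map_mul, h, Valued.v.map_one]
  exact left_ne_zero_of_mul_eq_one this

/-- the exponent function of an idele -/
noncomputable def exps (x : (FiniteAdeleRing R K)ˣ) (v : HeightOneSpectrum R) : ℤ :=
  ideleAddVal R K v (x.val.val v)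

lemma exps_eq_zero_of_integral (x : (FiniteAdeleRing R K)ˣ) (v : HeightOneSpectrum R)
    (h1 : x.val.val v ∈ v.adicCompletionIntegers K)
    (h2 : x.inv.val v ∈ v.adicCompletionIntegers K) : exps x v = 0 := by
  rw [exps, ideleAddVal_eq_zero_iff v (unit_valued_ne_zero x v)]
  rw [mem_adicCompletionIntegers] at h1 h2
  have hm : (Valued.v (x.val.val v) : ℤᵐ⁰) * Valued.v (x.inv.val v) = 1 := by
    rw [← Valued.v.map_mul, unit_val_mul_inv, Valued.v.map_one]
  have h1' : (1 : ℤᵐ⁰) ≤ Valued.v (x.val.val v) := by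
    conv_lhs => rw [← hm]
    calc (Valued.v (x.val.val v) : ℤᵐ⁰) * Valued.v (x.inv.val v)
        ≤ Valued.v (x.val.val v) * 1 := mul_le_mul_right h2 _
      _ = Valued.v (x.val.val v) := mul_one _
  exact le_antisymm h1 h1'

lemma exps_finite (x : (FiniteAdeleRing R K)ˣ) :
    {v : HeightOneSpectrum R | exps x v ≠ 0}.Finite := by
  have hx : {v : HeightOneSpectrum R | x.val.val v ∉ v.adicCompletionIntegers K}.Finite := x.val.2
  have hx' : {v : HeightOneSpectrum R | x.inv.val v ∉ v.adicCompletionIntegers K}.Finite :=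
    x.inv.2
  refine (hx.union hx').subset ?_
  intro v hv
  by_contra hc
  simp only [Set.mem_union, Set.mem_setOf_eq] at hc
  push_neg at hc
  exact hv (exps_eq_zero_of_integral x v hc.1 hc.2)

lemma exps_cofinite (x : (FiniteAdeleRing R K)ˣ) :
    ∀ᶠ v : HeightOneSpectrum R in Filter.cofinite, exps x v = 0 := by
  rw [Filter.eventually_cofinite]
  exact exps_finite x

lemma mulSupport_subset (x : (FiniteAdeleRing R K)ˣ) :
    (Function.mulSupport fun v => primeAsFractionalIdealUnit R K v ^ exps x v) ⊆
      {v : HeightOneSpectrum R | exps x v ≠ 0} := by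
  intro v hv
  simp only [Set.mem_setOf_eq]
  intro h
  apply hv
  simp [h]

lemma mulSupport_finite (x : (FiniteAdeleRing R K)ˣ) :
    (Function.mulSupport fun v => primeAsFractionalIdealUnit R K v ^ exps x v).Finite :=
  (exps_finite x).subset (mulSupport_subset x)

lemma coe_ideleToFractionalIdeal (x : (FiniteAdeleRing R K)ˣ) :
    ((ideleToFractionalIdeal R K x : (FractionalIdeal R⁰ K)ˣ) : FractionalIdeal R⁰ K) =
      ∏ᶠ v : HeightOneSpectrum R, (v.asIdeal : FractionalIdeal R⁰ K) ^ exps x v := by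
  rw [ideleToFractionalIdeal]
  have h := MonoidHom.map_finprod (Units.coeHom (FractionalIdeal R⁰ K)) (mulSupport_finite x)
  simp only [Units.coeHom_apply] at h
  refine h.trans (finprod_congr fun v => ?_)
  rw [Units.val_zpow_eq_zpow_val]
  rfl

lemma count_ideleToFractionalIdeal (x : (FiniteAdeleRing R K)ˣ) (v : HeightOneSpectrum R) :
    FractionalIdeal.count K v ((ideleToFractionalIdeal R K x : (FractionalIdeal R⁰ K)ˣ) :
      FractionalIdeal R⁰ K) = exps x v := by
  rw [coe_ideleToFractionalIdeal, FractionalIdeal.count_finprod K v (exps x) (exps_cofinite x)]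

lemma exps_one (v : HeightOneSpectrum R) : exps (1 : (FiniteAdeleRing R K)ˣ) v = 0 := by
  have h1 : (1 : (FiniteAdeleRing R K)ˣ).val.val v = 1 := rfl
  rw [exps, h1]
  refine ideleAddVal_eq v ?_
  rw [Valued.v.map_one]
  norm_num

lemma exps_mul (x y : (FiniteAdeleRing R K)ˣ) (v : HeightOneSpectrum R) :
    exps (x * y) v = exps x v + exps y v := by
  have h1 : (x * y).val.val v = x.val.val v * y.val.val v := rfl
  rw [exps, h1, ideleAddVal_mul v (unit_valued_ne_zero x v) (unit_valued_ne_zero y v)]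
  rfl

variable (R K) in
/-- `ideleToFractionalIdeal` as a monoid hom. -/
noncomputable def ideleHom : (FiniteAdeleRing R K)ˣ →* (FractionalIdeal R⁰ K)ˣ where
  toFun := ideleToFractionalIdeal R K
  map_one' := by
    rw [ideleToFractionalIdeal]
    have : ∀ v : HeightOneSpectrum R,
        primeAsFractionalIdealUnit R K v ^
          ideleAddVal R K v ((1 : (FiniteAdeleRing R K)ˣ).val.val v) = 1 := by
      intro v
      rw [show ideleAddVal R K v ((1 : (FiniteAdeleRing R K)ˣ).val.val v)
        = exps (1 : (FiniteAdeleRing R K)ˣ) v from rfl, exps_one, zpow_zero]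
    rw [finprod_congr this, finprod_one]
  map_mul' := by
    intro x y
    show ideleToFractionalIdeal R K (x * y) = _
    rw [ideleToFractionalIdeal]
    have : ∀ v : HeightOneSpectrum R,
        primeAsFractionalIdealUnit R K v ^ ideleAddVal R K v ((x * y).val.val v) =
          (primeAsFractionalIdealUnit R K v ^ exps x v) *
            (primeAsFractionalIdealUnit R K v ^ exps y v) := by
      intro v
      rw [show ideleAddVal R K v ((x * y).val.val v) = exps (x * y) v from rfl, exps_mul,
        zpow_add]
    rw [finprod_congr this, finprod_mul_distrib (mulSupport_finite x) (mulSupport_finite y)]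
    rfl

/-- The `v`-adic valuation of a nonzero `k : K` is `ofAdd` of minus the `count` of the
fractional ideal it spans. -/
lemma valuation_spanSingleton (v : HeightOneSpectrum R) {k : K} (hk : k ≠ 0) :
    v.valuation K k = (Multiplicative.ofAdd
      (-(FractionalIdeal.count K v (FractionalIdeal.spanSingleton R⁰ k))) : Multiplicative ℤ) := by
  obtain ⟨⟨r, s⟩, rfl⟩ := IsLocalization.mk'_surjective R⁰ k
  have hr : r ≠ 0 := by
    intro h
    apply hk
    rw [h]
    exact IsLocalization.mk'_zero s
  have hs : (s : R) ≠ 0 := nonZeroDivisors.coe_ne_zero s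
  have hrK : algebraMap R K r ≠ 0 :=
    fun h => hr ((injective_iff_map_eq_zero _).mp (IsFractionRing.injective R K) r h)
  have hsK : algebraMap R K (s : R) ≠ 0 :=
    fun h => hs ((injective_iff_map_eq_zero _).mp (IsFractionRing.injective R K) _ h)
  have hspan : FractionalIdeal.spanSingleton R⁰ (IsLocalization.mk' K r s) =
      (Ideal.span {r} : Ideal R) / (Ideal.span {(s : R)} : Ideal R) := by
    rw [IsFractionRing.mk'_eq_div, ← FractionalIdeal.spanSingleton_div_spanSingleton,
      FractionalIdeal.coeIdeal_span_singleton, FractionalIdeal.coeIdeal_span_singleton]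
  have hcount : FractionalIdeal.count K v
      (FractionalIdeal.spanSingleton R⁰ (IsLocalization.mk' K r s)) =
      FractionalIdeal.count K v ((Ideal.span {r} : Ideal R) : FractionalIdeal R⁰ K) -
        FractionalIdeal.count K v ((Ideal.span {(s : R)} : Ideal R) : FractionalIdeal R⁰ K) := by
    rw [hspan, div_eq_mul_inv, FractionalIdeal.count_mul K v ?_ ?_, FractionalIdeal.count_inv,
      sub_eq_add_neg]
    · rw [ne_eq, FractionalIdeal.coeIdeal_eq_zero]
      simpa [Ideal.span_singleton_eq_bot] using hr
    · rw [ne_eq, inv_eq_zero, FractionalIdeal.coeIdeal_eq_zero]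
      simpa [Ideal.span_singleton_eq_bot] using hs
  rw [valuation_of_mk', hcount]
  rw [FractionalIdeal.count_coe K v (by simpa [Ideal.span_singleton_eq_bot] using hr),
    FractionalIdeal.count_coe K v (by simpa [Ideal.span_singleton_eq_bot] using hs)]
  rw [show v.intValuation r = v.intValuationDef r from rfl,
    show v.intValuation (s : R) = v.intValuationDef (s : R) from rfl,
    v.intValuationDef_if_neg hr, v.intValuationDef_if_neg hs, ← WithZero.exp_sub]
  show WithZero.exp _ = WithZero.exp _
  congr 1
  ring

lemma principal_component (k : Kˣ) (v : HeightOneSpectrum R) :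
    ((Units.map (algebraMap K (FiniteAdeleRing R K)).toMonoidHom k).val).val v =
      ((k : K) : v.adicCompletion K) := rfl

lemma exps_principal (k : Kˣ) (v : HeightOneSpectrum R) :
    exps (Units.map (algebraMap K (FiniteAdeleRing R K)).toMonoidHom k) v =
      FractionalIdeal.count K v (FractionalIdeal.spanSingleton R⁰ (k : K)) := by
  rw [exps, principal_component]
  refine ideleAddVal_eq v ?_
  rw [v.valuedAdicCompletion_eq_valuation' (k : K),
    valuation_spanSingleton v (Units.ne_zero k)]

lemma coe_ideleToFractionalIdeal_principal (k : Kˣ) :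
    ((ideleToFractionalIdeal R K
      (Units.map (algebraMap K (FiniteAdeleRing R K)).toMonoidHom k) :
        (FractionalIdeal R⁰ K)ˣ) : FractionalIdeal R⁰ K) =
      FractionalIdeal.spanSingleton R⁰ (k : K) := by
  rw [coe_ideleToFractionalIdeal]
  rw [finprod_congr fun v => by rw [exps_principal k v]]
  refine FractionalIdeal.finprod_heightOneSpectrum_factorization' (K := K)
    (by rw [ne_eq, FractionalIdeal.spanSingleton_eq_zero_iff]; exact Units.ne_zero k)

section surj

variable (R K) in
/-- a uniformizer at `v`, as an element of `K` -/
noncomputable def unif (v : HeightOneSpectrum R) : K :=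
  (v.valuation_exists_uniformizer K).choose

lemma unif_spec (v : HeightOneSpectrum R) :
    v.valuation K (unif R K v) = (Multiplicative.ofAdd (-1 : ℤ) : Multiplicative ℤ) :=
  (v.valuation_exists_uniformizer K).choose_spec

lemma unif_completion_valued (v : HeightOneSpectrum R) :
    (Valued.v ((unif R K v : K) : v.adicCompletion K) : ℤᵐ⁰) =
      (Multiplicative.ofAdd (-1 : ℤ) : Multiplicative ℤ) := by
  rw [v.valuedAdicCompletion_eq_valuation' (unif R K v), unif_spec]

lemma unif_completion_ne_zero (v : HeightOneSpectrum R) :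
    ((unif R K v : K) : v.adicCompletion K) ≠ 0 := by
  intro h
  have := unif_completion_valued (R := R) (K := K) v
  rw [h, Valued.v.map_zero] at this
  exact WithZero.zero_ne_coe this

lemma valued_unif_zpow (v : HeightOneSpectrum R) (n : ℤ) :
    (Valued.v (((unif R K v : K) : v.adicCompletion K) ^ n) : ℤᵐ⁰) =
      (Multiplicative.ofAdd (-n) : Multiplicative ℤ) := by
  rw [map_zpow₀, unif_completion_valued, ← WithZero.coe_zpow, WithZero.coe_inj]
  rw [← ofAdd_toAdd (Multiplicative.ofAdd (-1 : ℤ) ^ n), toAdd_zpow]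
  simp

/-- the idele with component `unif v ^ e v` at `v` -/
noncomputable def expIdele (e : HeightOneSpectrum R → ℤ)
    (he : {v : HeightOneSpectrum R | e v ≠ 0}.Finite) : (FiniteAdeleRing R K)ˣ where
  val := ⟨fun v => ((unif R K v : K) : v.adicCompletion K) ^ (e v), by
    refine he.subset ?_
    intro v hv
    simp only [Set.mem_setOf_eq] at hv ⊢
    intro h
    apply hv
    show ((unif R K v : K) : v.adicCompletion K) ^ (e v) ∈ v.adicCompletionIntegers K
    rw [h, zpow_zero]
    exact one_mem _⟩
  inv := ⟨fun v => ((unif R K v : K) : v.adicCompletion K) ^ (-(e v)), by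
    refine he.subset ?_
    intro v hv
    simp only [Set.mem_setOf_eq] at hv ⊢
    intro h
    apply hv
    show ((unif R K v : K) : v.adicCompletion K) ^ (-(e v)) ∈ v.adicCompletionIntegers K
    rw [h, neg_zero, zpow_zero]
    exact one_mem _⟩
  val_inv := by
    ext v : 1
    show ((unif R K v : K) : v.adicCompletion K) ^ (e v) *
      ((unif R K v : K) : v.adicCompletion K) ^ (-(e v)) = 1
    rw [← zpow_add₀ (unif_completion_ne_zero v), add_neg_cancel, zpow_zero]
  inv_val := by
    ext v : 1
    show ((unif R K v : K) : v.adicCompletion K) ^ (-(e v)) *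
      ((unif R K v : K) : v.adicCompletion K) ^ (e v) = 1
    rw [← zpow_add₀ (unif_completion_ne_zero v), neg_add_cancel, zpow_zero]

lemma exps_expIdele (e : HeightOneSpectrum R → ℤ)
    (he : {v : HeightOneSpectrum R | e v ≠ 0}.Finite) (v : HeightOneSpectrum R) :
    exps (expIdele (K := K) e he) v = e v := by
  rw [exps]
  exact ideleAddVal_eq v (valued_unif_zpow v (e v))

lemma ideleHom_surjective : Function.Surjective (ideleHom R K) := by
  intro I
  have hI : ((I : (FractionalIdeal R⁰ K)ˣ) : FractionalIdeal R⁰ K) ≠ 0 := Units.ne_zero I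
  have hfin : {v : HeightOneSpectrum R |
      FractionalIdeal.count K v ((I : (FractionalIdeal R⁰ K)ˣ) : FractionalIdeal R⁰ K) ≠ 0}.Finite := by
    have := FractionalIdeal.finite_factors ((I : (FractionalIdeal R⁰ K)ˣ) : FractionalIdeal R⁰ K)
    rwa [Filter.eventually_cofinite] at this
  refine ⟨expIdele (K := K) _ hfin, ?_⟩
  apply Units.ext
  show ((ideleToFractionalIdeal R K _ : (FractionalIdeal R⁰ K)ˣ) : FractionalIdeal R⁰ K) = _
  rw [coe_ideleToFractionalIdeal]
  rw [finprod_congr fun v => by rw [exps_expIdele _ hfin v]]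
  exact FractionalIdeal.finprod_heightOneSpectrum_factorization' (K := K) hI

end surj

variable (R K)

/-- The subgroup `∏ᵥ Oᵥˣ` of everywhere-integral unit ideles inside the finite idele
group: those ideles `x` such that, at every place `v`, both `xᵥ` and `xᵥ⁻¹` are
`v`-adic integers. -/
noncomputable def integralUnitIdeles : Subgroup (FiniteAdeleRing R K)ˣ where
  carrier := {x | ∀ v : HeightOneSpectrum R,
    x.val.val v ∈ v.adicCompletionIntegers K ∧ x.inv.val v ∈ v.adicCompletionIntegers K}
  one_mem' := fun v => ⟨one_mem _, one_mem _⟩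
  mul_mem' := by
    intro a b ha hb v
    exact ⟨mul_mem (ha v).1 (hb v).1, mul_mem (hb v).2 (ha v).2⟩
  inv_mem' := by
    intro a ha v
    exact ⟨(ha v).2, (ha v).1⟩

/-- The subgroup of the finite idele group generated by the principal ideles (the image
of `Kˣ`) and the everywhere-integral unit ideles `∏ᵥ Oᵥˣ`. -/
noncomputable def principalAndIntegralUnitIdeles : Subgroup (FiniteAdeleRing R K)ˣ :=
  (Units.map (algebraMap K (FiniteAdeleRing R K)).toMonoidHom).range ⊔ integralUnitIdeles R K

variable {R K}

lemma ideleToFractionalIdeal_eq_one_of_exps_zero {y : (FiniteAdeleRing R K)ˣ}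
    (h : ∀ v, exps y v = 0) : ideleToFractionalIdeal R K y = 1 := by
  rw [ideleToFractionalIdeal]
  have : ∀ v : HeightOneSpectrum R,
      primeAsFractionalIdealUnit R K v ^ ideleAddVal R K v (y.val.val v) = 1 := by
    intro v
    rw [show ideleAddVal R K v (y.val.val v) = exps y v from rfl, h, zpow_zero]
  rw [finprod_congr this, finprod_one]

lemma mem_integralUnitIdeles_of_exps_zero {y : (FiniteAdeleRing R K)ˣ}
    (h : ∀ v, exps y v = 0) : y ∈ integralUnitIdeles R K := by
  intro v
  have h1 : (Valued.v (y.val.val v) : ℤᵐ⁰) = 1 :=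
    (ideleAddVal_eq_zero_iff v (unit_valued_ne_zero y v)).mp (h v)
  have hm : (Valued.v (y.val.val v) : ℤᵐ⁰) * Valued.v (y.inv.val v) = 1 := by
    rw [← Valued.v.map_mul, unit_val_mul_inv, Valued.v.map_one]
  rw [h1, one_mul] at hm
  exact ⟨(mem_adicCompletionIntegers R K v).mpr h1.le,
    (mem_adicCompletionIntegers R K v).mpr hm.le⟩

lemma ideleHom_ker :
    ((ClassGroup.mk K).comp (ideleHom R K)).ker = principalAndIntegralUnitIdeles R K := by
  apply le_antisymm
  · intro x hx
    rw [MonoidHom.mem_ker, MonoidHom.comp_apply, ClassGroup.mk_eq_one_iff] at hx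
    obtain ⟨⟨a, ha⟩⟩ := hx
    have hcoe : ((ideleHom R K x : (FractionalIdeal R⁰ K)ˣ) : FractionalIdeal R⁰ K) =
        FractionalIdeal.spanSingleton R⁰ a := by
      apply FractionalIdeal.coeToSubmodule_injective
      dsimp only
      rw [FractionalIdeal.coe_spanSingleton]
      exact ha
    have ha0 : a ≠ 0 := by
      intro h
      apply Units.ne_zero (ideleHom R K x)
      rw [hcoe, h, FractionalIdeal.spanSingleton_zero]
    set ku : Kˣ := Units.mk0 a ha0 with hku
    set u := Units.map (algebraMap K (FiniteAdeleRing R K)).toMonoidHom ku with hu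
    have hphi : ideleHom R K u = ideleHom R K x := by
      apply Units.ext
      show ((ideleToFractionalIdeal R K u : (FractionalIdeal R⁰ K)ˣ) : FractionalIdeal R⁰ K) = _
      rw [coe_ideleToFractionalIdeal_principal ku, hcoe]
      rfl
    have hy : u⁻¹ * x ∈ integralUnitIdeles R K := by
      apply mem_integralUnitIdeles_of_exps_zero
      intro v
      have h1 : ideleHom R K (u⁻¹ * x) = 1 := by
        rw [map_mul, map_inv, hphi, inv_mul_cancel]
      have := count_ideleToFractionalIdeal (u⁻¹ * x) v
      rw [show ideleToFractionalIdeal R K (u⁻¹ * x) = ideleHom R K (u⁻¹ * x) from rfl, h1] at this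
      rw [← this, Units.val_one, FractionalIdeal.count_one]
    have hx' : x = u * (u⁻¹ * x) := by rw [← mul_assoc, mul_inv_cancel, one_mul]
    rw [hx']
    exact Subgroup.mul_mem _ (Subgroup.mem_sup_left ⟨ku, rfl⟩) (Subgroup.mem_sup_right hy)
  · rw [principalAndIntegralUnitIdeles, sup_le_iff]
    constructor
    · rintro x ⟨k, rfl⟩
      rw [MonoidHom.mem_ker, MonoidHom.comp_apply, ClassGroup.mk_eq_one_iff]
      refine ⟨⟨(k : K), ?_⟩⟩
      show _ = Submodule.span R {(k : K)}
      rw [show ((ideleHom R K _ : (FractionalIdeal R⁰ K)ˣ) : FractionalIdeal R⁰ K) =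
        FractionalIdeal.spanSingleton R⁰ (k : K) from coe_ideleToFractionalIdeal_principal k,
        FractionalIdeal.coe_spanSingleton]
    · intro y hy
      rw [MonoidHom.mem_ker, MonoidHom.comp_apply]
      have : ideleHom R K y = 1 :=
        ideleToFractionalIdeal_eq_one_of_exps_zero fun v =>
          exps_eq_zero_of_integral y v (hy v).1 (hy v).2
      rw [this, map_one]

lemma classGroupMk_surjective :
    Function.Surjective (ClassGroup.mk K : (FractionalIdeal R⁰ K)ˣ →* ClassGroup R) := by
  rintro ⟨J⟩
  refine ⟨Units.map ↑(FractionalIdeal.canonicalEquiv R⁰ (FractionRing R) K) J, ?_⟩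
  rw [ClassGroup.mk_canonicalEquiv]
  exact (ClassGroup.Quot_mk_eq_mk J).symm

/-- **The idele-theoretic description of the class group.**  For a number field `F` with
ring of integers `𝓞 F`, the map sending a finite idele `(xᵥ)ᵥ` to (the class of) the
fractional ideal `∏ᵥ 𝔭ᵥ^(v(xᵥ))` it generates induces a group isomorphism from the
quotient of the finite idele group `(𝔸_F^fin)ˣ` by the subgroup generated by the
principal ideles `Fˣ` and the integral unit ideles `∏ᵥ Oᵥˣ`, onto the class group
`Cl(𝓞 F)`. -/
theorem idele_class_group_iso_classGroup (F : Type) [Field F] [NumberField F] :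
    ∃ iso : ((FiniteAdeleRing (𝓞 F) F)ˣ ⧸ principalAndIntegralUnitIdeles (𝓞 F) F)
        ≃* ClassGroup (𝓞 F),
      ∀ x : (FiniteAdeleRing (𝓞 F) F)ˣ,
        iso (QuotientGroup.mk x) = ClassGroup.mk F (ideleToFractionalIdeal (𝓞 F) F x) := by
  set Φ := ((ClassGroup.mk F).comp (ideleHom (𝓞 F) F)) with hΦ
  have hsurj : Function.Surjective Φ := classGroupMk_surjective.comp ideleHom_surjective
  refine ⟨(QuotientGroup.quotientMulEquivOfEq (ideleHom_ker (R := 𝓞 F) (K := F)).symm).trans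
    (QuotientGroup.quotientKerEquivOfSurjective Φ hsurj), ?_⟩
  intro x
  rfl
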